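/- arXiv:2508.05270 — 5 statements merged into one kernel-verified Lean document; each statement's English description precedes it below -/
import Mathlib

section
/- The D4 cluster map, defined on nonzero variables by x1' = (1+x2)/x1, x2' = (1+x3*x4*x1')/x2, x3' = (1+x2')/x3, x4' = (1+x2')/x4, satisfies φ^4 = id; i.e., applying the map four times to any point (x1,x2,x3,x4) with all intermediate denominators nonzero returns the original point. -/
/-- The D4 cluster map φ on quadruples of field elements. -/
def d4Map {F : Type*} [Field F] (p : F × F × F × F) : F × F × F × F :=
  let x1 := p.1; let x2 := p.2.1; let x3 := p.2.2.1; let x4 := p.2.2.2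
  let x1' := (1 + x2) / x1
  let x2' := (1 + x3 * x4 * x1') / x2
  let x3' := (1 + x2') / x3
  let x4' := (1 + x2') / x4
  (x1', x2', x3', x4')

/-- One step of the D4 map, stated with cross-multiplied equations. -/
lemma d4Map_step {F : Type*} [Field F] (x1 x2 x3 x4 y1 y2 y3 y4 : F)
    (hx1 : x1 ≠ 0) (hx2 : x2 ≠ 0) (hx3 : x3 ≠ 0) (hx4 : x4 ≠ 0)
    (h1 : y1 * x1 = 1 + x2) (h2 : y2 * x2 = 1 + x3 * x4 * y1)
    (h3 : y3 * x3 = 1 + y2) (h4 : y4 * x4 = 1 + y2) :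
    d4Map (x1, x2, x3, x4) = (y1, y2, y3, y4) := by
  have e1 : (1 + x2) / x1 = y1 := by rw [← h1, mul_div_assoc, div_self hx1, mul_one]
  simp only [d4Map, e1, Prod.mk.injEq]
  have e2 : (1 + x3 * x4 * y1) / x2 = y2 := by
    rw [← h2, mul_div_assoc, div_self hx2, mul_one]
  have e3 : (1 + y2) / x3 = y3 := by rw [← h3, mul_div_assoc, div_self hx3, mul_one]
  have e4 : (1 + y2) / x4 = y4 := by rw [← h4, mul_div_assoc, div_self hx4, mul_one]
  rw [e2, e3, e4]
  simp

/-- The D4 cluster map has period 4: applying it four times returns the original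
point, provided all intermediate denominators are nonzero. -/
theorem d4Map_periodic_four {F : Type*} [Field F] (p : F × F × F × F)
    (h : ∀ k < 4, (d4Map^[k] p).1 ≠ 0 ∧ (d4Map^[k] p).2.1 ≠ 0 ∧
      (d4Map^[k] p).2.2.1 ≠ 0 ∧ (d4Map^[k] p).2.2.2 ≠ 0) :
    d4Map^[4] p = p := by
  obtain ⟨a, b, c, d⟩ := p
  obtain ⟨ha, hb, hc, hd⟩ := h 0 (by norm_num)
  simp only [Function.iterate_zero, id] at ha hb hc hd
  -- step 1
  have e1 : d4Map (a, b, c, d) =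
      ((b + 1) / a, (a + b*c*d + c*d) / (a*b),
       (a*b + a + b*c*d + c*d) / (a*b*c), (a*b + a + b*c*d + c*d) / (a*b*d)) := by
    apply d4Map_step _ _ _ _ _ _ _ _ ha hb hc hd <;> (field_simp; ring)
  have h1 := h 1 (by norm_num)
  rw [Function.iterate_one, e1] at h1
  obtain ⟨n1, n2, n3, -⟩ := h1
  replace n1 := (div_ne_zero_iff.mp n1).1
  replace n2 := (div_ne_zero_iff.mp n2).1
  replace n3 := (div_ne_zero_iff.mp n3).1
  -- step 2
  have e2 : d4Map ((b + 1) / a, (a + b*c*d + c*d) / (a*b),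
       (a*b + a + b*c*d + c*d) / (a*b*c), (a*b + a + b*c*d + c*d) / (a*b*d)) =
      ((a + c*d) / b,
       (a^2*b^2 + 2*a^2*b + a^2 + 3*a*b*c*d + 2*a*c*d + b*c^2*d^2 + c^2*d^2) / (a*b^2*c*d),
       (a*b + a + c*d) / (b*d), (a*b + a + c*d) / (b*c)) := by
    refine d4Map_step _ _ _ _ _ _ _ _
      (div_ne_zero n1 ha) (div_ne_zero n2 (by simp [ha, hb]))
      (div_ne_zero n3 (by simp [ha, hb, hc])) (div_ne_zero n3 (by simp [ha, hb, hd]))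
      ?_ ?_ ?_ ?_
    · rw [div_mul_div_comm, one_add_div (by simp [ha, hb, hc, hd]),
        div_eq_div_iff (by simp [ha, hb, hc, hd]) (by simp [ha, hb, hc, hd])]
      ring
    · rw [div_mul_div_comm, div_mul_div_comm, div_mul_div_comm,
        one_add_div (by simp [ha, hb, hc, hd]),
        div_eq_div_iff (by simp [ha, hb, hc, hd]) (by simp [ha, hb, hc, hd])]
      ring
    · rw [div_mul_div_comm, one_add_div (by simp [ha, hb, hc, hd]),
        div_eq_div_iff (by simp [ha, hb, hc, hd]) (by simp [ha, hb, hc, hd])]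
      ring
    · rw [div_mul_div_comm, one_add_div (by simp [ha, hb, hc, hd]),
        div_eq_div_iff (by simp [ha, hb, hc, hd]) (by simp [ha, hb, hc, hd])]
      ring
  have h2 := h 2 (by norm_num)
  rw [show (2:ℕ) = 1+1 from rfl, Function.iterate_add_apply, Function.iterate_one, e1, e2] at h2
  obtain ⟨m1, m2, m3, -⟩ := h2
  replace m1 := (div_ne_zero_iff.mp m1).1
  replace m2 := (div_ne_zero_iff.mp m2).1
  replace m3 := (div_ne_zero_iff.mp m3).1
  -- step 3
  have e3 : d4Map ((a + c*d) / b,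
       (a^2*b^2 + 2*a^2*b + a^2 + 3*a*b*c*d + 2*a*c*d + b*c^2*d^2 + c^2*d^2) / (a*b^2*c*d),
       (a*b + a + c*d) / (b*d), (a*b + a + c*d) / (b*c)) =
      ((a*b^2 + 2*a*b + a + b*c*d + c*d) / (a*b*c*d),
       (a*b^2 + 2*a*b + a + c*d) / (b*c*d), (b + 1) / c, (b + 1) / d) := by
    refine d4Map_step _ _ _ _ _ _ _ _
      (div_ne_zero m1 hb) (div_ne_zero m2 (by simp [ha, hb, hc, hd]))
      (div_ne_zero m3 (by simp [hb, hd])) (div_ne_zero m3 (by simp [hb, hc]))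
      ?_ ?_ ?_ ?_
    · rw [div_mul_div_comm, one_add_div (by simp [ha, hb, hc, hd]),
        div_eq_div_iff (by simp [ha, hb, hc, hd]) (by simp [ha, hb, hc, hd])]
      ring
    · rw [div_mul_div_comm, div_mul_div_comm, div_mul_div_comm,
        one_add_div (by simp [ha, hb, hc, hd]),
        div_eq_div_iff (by simp [ha, hb, hc, hd]) (by simp [ha, hb, hc, hd])]
      ring
    · rw [div_mul_div_comm, one_add_div (by simp [ha, hb, hc, hd]),
        div_eq_div_iff (by simp [ha, hb, hc, hd]) (by simp [ha, hb, hc, hd])]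
      ring
    · rw [div_mul_div_comm, one_add_div (by simp [ha, hb, hc, hd]),
        div_eq_div_iff (by simp [ha, hb, hc, hd]) (by simp [ha, hb, hc, hd])]
      ring
  have h3 := h 3 (by norm_num)
  rw [show (3:ℕ) = 1+(1+1) from rfl, Function.iterate_add_apply, Function.iterate_add_apply,
    Function.iterate_one, e1, e2, e3] at h3
  obtain ⟨k1, k2, -, -⟩ := h3
  replace k1 := (div_ne_zero_iff.mp k1).1
  replace k2 := (div_ne_zero_iff.mp k2).1
  -- step 4
  have e4 : d4Map ((a*b^2 + 2*a*b + a + b*c*d + c*d) / (a*b*c*d),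
       (a*b^2 + 2*a*b + a + c*d) / (b*c*d), (b + 1) / c, (b + 1) / d) =
      (a, b, c, d) := by
    apply d4Map_step _ _ _ _ _ _ _ _
      (div_ne_zero k1 (by simp [ha, hb, hc, hd])) (div_ne_zero k2 (by simp [hb, hc, hd]))
      (div_ne_zero n1 hc) (div_ne_zero n1 hd) <;> (field_simp; ring)
  rw [show (4:ℕ) = 1+(1+(1+1)) from rfl, Function.iterate_add_apply, Function.iterate_add_apply,
    Function.iterate_add_apply, Function.iterate_one, e1, e2, e3, e4]
end

section
/- The symplectic reduction of the D4 cluster map, given by φ̂(y1,y2) = ((y1*y2+y2+1)/y1, (y1+1)*(y2+1)^2/(y1^2*y2)), satisfies φ̂^4 = id wherever defined (all denominators nonzero). -/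
/-- The symplectic reduction of the D4 cluster map. -/
def d4Red {F : Type*} [Field F] (p : F × F) : F × F :=
  ((p.1 * p.2 + p.2 + 1) / p.1, (p.1 + 1) * (p.2 + 1) ^ 2 / (p.1 ^ 2 * p.2))

private def d4g {F : Type*} [Field F] (p : F × F) : F × F :=
  (((p.1 + p.2 + 1) ^ 2 + p.1 * p.2 * (p.2 + 1)) / (p.1 ^ 2 * p.2),
    (p.1 + p.2 + 1) ^ 2 / (p.1 * p.2 * (p.2 + 1)))

private lemma d4sq {F : Type*} [Field F] (x y : F) (hx : x ≠ 0) (hy : y ≠ 0)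
    (hn : x * y + y + 1 ≠ 0) (hx1 : x + 1 ≠ 0) (hy1 : y + 1 ≠ 0) :
    d4Red (d4Red (x, y)) = d4g (x, y) := by
  have hx2y : x ^ 2 * y ≠ 0 := mul_ne_zero (pow_ne_zero 2 hx) hy
  have hxyy : x * y * (y + 1) ≠ 0 := mul_ne_zero (mul_ne_zero hx hy) hy1
  set u : F := (x * y + y + 1) / x with hudef
  set v : F := (x + 1) * (y + 1) ^ 2 / (x ^ 2 * y) with hvdef
  have hu : u * x = x * y + y + 1 := div_mul_cancel₀ _ hx
  have hv : v * (x ^ 2 * y) = (x + 1) * (y + 1) ^ 2 := div_mul_cancel₀ _ hx2y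
  have hu0 : u ≠ 0 := div_ne_zero hn hx
  have hv0 : v ≠ 0 := div_ne_zero (mul_ne_zero hx1 (pow_ne_zero 2 hy1)) hx2y
  have huv : u ^ 2 * v ≠ 0 := mul_ne_zero (pow_ne_zero 2 hu0) hv0
  show ((u * v + v + 1) / u, (u + 1) * (v + 1) ^ 2 / (u ^ 2 * v)) = _
  refine Prod.ext ?_ ?_
  · show (u * v + v + 1) / u = ((x + y + 1) ^ 2 + x * y * (y + 1)) / (x ^ 2 * y)
    rw [div_eq_div_iff hu0 hx2y]
    linear_combination (u + 1) * hv - (x + y + 1) * hu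
  · show (u + 1) * (v + 1) ^ 2 / (u ^ 2 * v) = (x + y + 1) ^ 2 / (x * y * (y + 1))
    rw [div_eq_div_iff huv hxyy]
    have hM : (x ^ 6 * y ^ 2 : F) ≠ 0 :=
      mul_ne_zero (pow_ne_zero 6 hx) (pow_ne_zero 2 hy)
    refine mul_right_cancel₀ hM ?_
    linear_combination ((1)*x^6*y^3 + (1)*x^6*y^4 + (-1)*v*x^4*y^2 + (-3)*v*x^4*y^3 + (-3)*v*x^4*y^4 + (-1)*v*x^4*y^5 + (-2)*v*x^5*y^2 + (-5)*v*x^5*y^3 + (-4)*v*x^5*y^4 + (-1)*v*x^5*y^5 + (-1)*v*x^6*y^2 + (-1)*v*x^6*y^3 + (-1)*v*x^7*y^3 + (1)*v^2*x^6*y^3 + (1)*v^2*x^6*y^4 + (-1)*u*v*x^5*y^2 + (-2)*u*v*x^5*y^3 + (-1)*u*v*x^5*y^4 + (-2)*u*v*x^6*y^2 + (-2)*u*v*x^6*y^3 + (-1)*u*v*x^7*y^2) * hu + ((-1)*x^6*y^3 + (1)*v*x^4*y^2 + (2)*v*x^4*y^3 + (1)*v*x^4*y^4 + (1)*v*x^5*y^2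 + (2)*v*x^5*y^3 + (1)*v*x^5*y^4) * hv

private lemma d4gg {F : Type*} [Field F] (x y : F) (hx : x ≠ 0) (hy : y ≠ 0)
    (hy1 : y + 1 ≠ 0) (hs : x + y + 1 ≠ 0)
    (hN : (x + y + 1) ^ 2 + x * y * (y + 1) ≠ 0) :
    d4g (d4g (x, y)) = (x, y) := by
  have hx2y : x ^ 2 * y ≠ 0 := mul_ne_zero (pow_ne_zero 2 hx) hy
  have hxyy : x * y * (y + 1) ≠ 0 := mul_ne_zero (mul_ne_zero hx hy) hy1
  set u : F := ((x + y + 1) ^ 2 + x * y * (y + 1)) / (x ^ 2 * y) with hudef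
  set v : F := (x + y + 1) ^ 2 / (x * y * (y + 1)) with hvdef
  have hu : u * (x ^ 2 * y) = (x + y + 1) ^ 2 + x * y * (y + 1) :=
    div_mul_cancel₀ _ hx2y
  have hv : v * (x * y * (y + 1)) = (x + y + 1) ^ 2 := div_mul_cancel₀ _ hxyy
  have hu0 : u ≠ 0 := div_ne_zero hN hx2y
  have hv0 : v ≠ 0 := div_ne_zero (pow_ne_zero 2 hs) hxyy
  have hv1 : v + 1 ≠ 0 := by
    have : (v + 1) * (x * y * (y + 1)) = (x + y + 1) ^ 2 + x * y * (y + 1) := by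
      rw [add_mul, hv, one_mul]
    intro h0
    rw [h0, zero_mul] at this
    exact hN this.symm
  have huv : u ^ 2 * v ≠ 0 := mul_ne_zero (pow_ne_zero 2 hu0) hv0
  have huvv : u * v * (v + 1) ≠ 0 := mul_ne_zero (mul_ne_zero hu0 hv0) hv1
  show (((u + v + 1) ^ 2 + u * v * (v + 1)) / (u ^ 2 * v),
      (u + v + 1) ^ 2 / (u * v * (v + 1))) = (x, y)
  have hM : (x ^ 8 * y ^ 5 * (y + 1) ^ 2 : F) ≠ 0 :=
    mul_ne_zero (mul_ne_zero (pow_ne_zero 8 hx) (pow_ne_zero 5 hy)) (pow_ne_zero 2 hy1)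
  refine Prod.ext ?_ ?_
  · show ((u + v + 1) ^ 2 + u * v * (v + 1)) / (u ^ 2 * v) = x
    rw [div_eq_iff huv]
    refine mul_right_cancel₀ hM ?_
    linear_combination (((1)*x^4*y^3 + (4)*x^4*y^4 + (6)*x^4*y^5 + (4)*x^4*y^6 + (1)*x^4*y^7 + (2)*x^5*y^3 + (7)*x^5*y^4 + (9)*x^5*y^5 + (5)*x^5*y^6 + (1)*x^5*y^7 + (1)*x^6*y^3 + (4)*x^6*y^4 + (5)*x^6*y^5 + (2)*x^6*y^6) + ((-1)*x^5*y^3 + (-4)*x^5*y^4 + (-6)*x^5*y^5 + (-4)*x^5*y^6 + (-1)*x^5*y^7 + (-2)*x^6*y^3 + (-4)*x^6*y^4 + (-3)*x^6*y^5 + (-2)*x^6*y^6 + (-1)*x^6*y^7 + (-1)*x^7*y^3 + (-2)*x^7*y^4 + (-1)*x^7*y^5)*v + ((1)*x^6*y^4 + (2)*x^6*y^5 + (1)*x^6*y^6)*v^2 + ((1)*x^6*y^4 + (2)*x^6*y^5 + (1)*x^6*y^6)*u + ((-1)*x^7*y^4 + (-2)*x^7*y^5 + (-1)*x^7*y^6)*u*v)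 * hu + (((-1)*x^4*y^3 + (-4)*x^4*y^4 + (-6)*x^4*y^5 + (-4)*x^4*y^6 + (-1)*x^4*y^7 + (-2)*x^5*y^3 + (-8)*x^5*y^4 + (-12)*x^5*y^5 + (-8)*x^5*y^6 + (-2)*x^5*y^7 + (-1)*x^6*y^3 + (-4)*x^6*y^4 + (-6)*x^6*y^5 + (-4)*x^6*y^6 + (-1)*x^6*y^7) + ((1)*x^5*y^3 + (3)*x^5*y^4 + (3)*x^5*y^5 + (1)*x^5*y^6 + (2)*x^6*y^3 + (5)*x^6*y^4 + (4)*x^6*y^5 + (1)*x^6*y^6 + (1)*x^7*y^3 + (2)*x^7*y^4 + (1)*x^7*y^5)*v) * hv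
  · show (u + v + 1) ^ 2 / (u * v * (v + 1)) = y
    rw [div_eq_iff huvv]
    refine mul_right_cancel₀ hM ?_
    linear_combination (((1)*x^4*y^3 + (4)*x^4*y^4 + (6)*x^4*y^5 + (4)*x^4*y^6 + (1)*x^4*y^7 + (2)*x^5*y^3 + (7)*x^5*y^4 + (9)*x^5*y^5 + (5)*x^5*y^6 + (1)*x^5*y^7 + (1)*x^6*y^3 + (4)*x^6*y^4 + (5)*x^6*y^5 + (2)*x^6*y^6) + ((2)*x^6*y^4 + (3)*x^6*y^5 + (-1)*x^6*y^7)*v + ((-1)*x^6*y^5 + (-2)*x^6*y^6 + (-1)*x^6*y^7)*v^2 + ((1)*x^6*y^4 + (2)*x^6*y^5 + (1)*x^6*y^6)*u) * hu + (((-1)*x^4*y^3 + (-4)*x^4*y^4 + (-6)*x^4*y^5 + (-4)*x^4*y^6 + (-1)*x^4*y^7 + (-2)*x^5*y^3 + (-8)*x^5*y^4 + (-12)*x^5*y^5 + (-8)*x^5*y^6 + (-2)*x^5*y^7 + (-1)*x^6*y^3 + (-4)*x^6*y^4 + (-6)*x^6*y^5 + (-4)*x^6*y^6 + (-1)*x^6*y^7)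 + ((-1)*x^5*y^4 + (-3)*x^5*y^5 + (-3)*x^5*y^6 + (-1)*x^5*y^7 + (-2)*x^6*y^4 + (-5)*x^6*y^5 + (-4)*x^6*y^6 + (-1)*x^6*y^7)*v) * hv

/-- The reduced D4 map satisfies φ̂⁴ = id wherever all denominators are nonzero. -/
theorem d4Red_periodic_four {F : Type*} [Field F] (p : F × F)
    (h : ∀ k < 4, (d4Red^[k] p).1 ≠ 0 ∧ (d4Red^[k] p).2 ≠ 0) :
    d4Red^[4] p = p := by
  obtain ⟨x, y⟩ := p
  obtain ⟨hx, hy⟩ := h 0 (by norm_num)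
  simp only [Function.iterate_zero, id_eq] at hx hy
  obtain ⟨h11, h12⟩ := h 1 (by norm_num)
  rw [Function.iterate_one] at h11 h12
  simp only [d4Red] at h11 h12
  rw [div_ne_zero_iff] at h11 h12
  have hn : x * y + y + 1 ≠ 0 := h11.1
  have hx1 : x + 1 ≠ 0 := left_ne_zero_of_mul h12.1
  have hy1 : y + 1 ≠ 0 := by
    have := right_ne_zero_of_mul h12.1
    exact pow_ne_zero_iff (n := 2) (by norm_num) |>.mp this
  have e2 : d4Red^[2] (x, y) = d4g (x, y) := d4sq x y hx hy hn hx1 hy1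
  obtain ⟨h21, h22⟩ := h 2 (by norm_num)
  rw [e2] at h21 h22
  simp only [d4g] at h21 h22
  have hN : (x + y + 1) ^ 2 + x * y * (y + 1) ≠ 0 := (div_ne_zero_iff.mp h21).1
  have hs : x + y + 1 ≠ 0 := by
    have := (div_ne_zero_iff.mp h22).1
    exact pow_ne_zero_iff (n := 2) (by norm_num) |>.mp this
  set u : F := ((x + y + 1) ^ 2 + x * y * (y + 1)) / (x ^ 2 * y) with hudef
  set v : F := (x + y + 1) ^ 2 / (x * y * (y + 1)) with hvdef
  obtain ⟨h31, h32⟩ := h 3 (by norm_num)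
  have e3 : d4Red^[3] (x, y) = d4Red (d4g (x, y)) := by
    show d4Red (d4Red^[2] (x, y)) = _
    rw [e2]
  rw [e3] at h31 h32
  have egq : d4g (x, y) = (u, v) := rfl
  rw [egq] at h31 h32
  simp only [d4Red] at h31 h32
  rw [div_ne_zero_iff] at h31 h32
  have hn2 : u * v + v + 1 ≠ 0 := h31.1
  have hu1 : u + 1 ≠ 0 := left_ne_zero_of_mul h32.1
  have hv1 : v + 1 ≠ 0 := by
    have := right_ne_zero_of_mul h32.1
    exact pow_ne_zero_iff (n := 2) (by norm_num) |>.mp this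
  calc d4Red^[4] (x, y) = d4Red (d4Red (d4Red^[2] (x, y))) := rfl
    _ = d4Red (d4Red (u, v)) := by rw [e2, egq]
    _ = d4g (u, v) := d4sq u v h21 h22 hn2 hu1 hv1
    _ = d4g (d4g (x, y)) := by rw [egq]
    _ = (x, y) := d4gg x y hx hy hy1 hs hN
end

section
/- The function K(y1,y2) = ((1+y1)^3 + (2+5*y1+y1^3)*y2 + (1+y1)^2*y2^2)/(y1^2*y2) is invariant under the map φ̂(y1,y2) = ((y1*y2+y2+1)/y1, (y1+1)*(y2+1)^2/(y1^2*y2)); i.e., K(φ̂(y1,y2)) = K(y1,y2) whenever all denominators are nonzero. -/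
/-- First integral of the reduced D4 map. -/
def d4K {F : Type*} [Field F] (p : F × F) : F :=
  ((1 + p.1) ^ 3 + (2 + 5 * p.1 + p.1 ^ 3) * p.2 + (1 + p.1) ^ 2 * p.2 ^ 2) /
    (p.1 ^ 2 * p.2)

/-- K is invariant under the reduced D4 map: K(φ̂(y₁,y₂)) = K(y₁,y₂) whenever all
denominators are nonzero. -/
theorem d4K_invariant {F : Type*} [Field F] (p : F × F)
    (h1 : p.1 ≠ 0) (h2 : p.2 ≠ 0)
    (h1' : (d4Red p).1 ≠ 0) (h2' : (d4Red p).2 ≠ 0) :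
    d4K (d4Red p) = d4K p := by
  obtain ⟨a, b⟩ := p
  simp only [d4Red, d4K] at *
  set c := (a * b + b + 1) / a with hc
  set d := (a + 1) * (b + 1) ^ 2 / (a ^ 2 * b) with hd
  have ha2b : a ^ 2 * b ≠ 0 := mul_ne_zero (pow_ne_zero 2 h1) h2
  have e1 : c * a = a * b + b + 1 := div_mul_cancel₀ _ h1
  have e2 : d * (a ^ 2 * b) = (a + 1) * (b + 1) ^ 2 := div_mul_cancel₀ _ ha2b
  rw [div_eq_div_iff (mul_ne_zero (pow_ne_zero 2 h1') h2') ha2b]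
  apply mul_right_cancel₀ (show (a ^ 7 * b ^ 2 : F) ≠ 0 from
    mul_ne_zero (pow_ne_zero 7 h1) (pow_ne_zero 2 h2))
  linear_combination (a^6*b^3 + (2)*a^6*b^4 + a^6*b^5 + (3)*a^7*b^3 + (5)*a^7*b^4 + (2)*a^7*b^5 + (3)*a^8*b^3 + (3)*a^8*b^4 + a^8*b^5 - (1)*d*a^5*b^2 - (3)*d*a^5*b^3 - (3)*d*a^5*b^4 - (1)*d*a^5*b^5 - (3)*d*a^6*b^2 - (8)*d*a^6*b^3 - (7)*d*a^6*b^4 - (2)*d*a^6*b^5 - (3)*d*a^7*b^2 - (6)*d*a^7*b^3 - (4)*d*a^7*b^4 - (1)*d*a^7*b^5 - (1)*d*a^8*b^2 - (1)*d*a^8*b^4 - (1)*d*a^9*b^3 - (1)*d*a^9*b^4 + d^2*a^7*b^3 + d^2*a^7*b^4 + (2)*d^2*a^8*b^3 + d^2*a^8*b^4 + c*a^7*b^3 + c*a^7*b^4 + (3)*c*a^8*b^3 + c*a^8*b^4 - (1)*c*d*a^6*b^2 - (2)*c*d*a^6*b^3 - (1)*c*d*a^6*b^4 - (3)*c*d*a^7*b^2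 - (4)*c*d*a^7*b^3 - (1)*c*d*a^7*b^4 - (3)*c*d*a^8*b^2 - (1)*c*d*a^9*b^2 - (1)*c*d*a^9*b^3 + c*d^2*a^8*b^3 + c^2*a^8*b^3 + c^2*d*a^8*b^3) * e1 + (-a^6*b^3 - (1)*a^6*b^4 - (2)*a^7*b^3 - (2)*a^7*b^4 - (1)*a^8*b^3 - (1)*a^8*b^4 + d*a^5*b^2 + (2)*d*a^5*b^3 + d*a^5*b^4 + (2)*d*a^6*b^2 + (4)*d*a^6*b^3 + (2)*d*a^6*b^4 + d*a^7*b^2 + (2)*d*a^7*b^3 + d*a^7*b^4) * e2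
end

section
/- The 14×14 integer matrix M = M_φ · M_χ, representing the composition φ̂∘χ̂ on the Picard lattice, has characteristic polynomial (λ−1)^9 (λ+1)^5. -/
open Polynomial

/-- The matrix representation of the action of φ̂ on Pic(X). -/
def Mphi : Matrix (Fin 14) (Fin 14) ℤ :=
  Matrix.of
    ![![0, 0, 0, 1, 0, 0, 0, 0, 0, 1, 0, 0, 0, 0],
      ![1, 0, 0, 0, 0, 0, 0, 0, 0, 0, 0, 0, -1, 0],
      ![0, 1, 0, 0, 0, 0, 0, 0, 0, 1, 0, 0, 1, 0],
      ![0, 0, 1, 0, 0, 0, 0, 0, 0, 2, 0, 0, 2, 0],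
      ![0, 0, 0, 0, 0, 0, 0, 1, 0, 0, 0, 0, -1, 0],
      ![0, 0, 0, 0, 1, 0, 0, 0, 0, 0, 0, 0, 0, 0],
      ![0, 0, 0, 0, 0, 1, 0, 0, 0, 1, 0, 0, 1, 0],
      ![0, 0, 0, 0, 0, 0, 1, 0, 0, 1, 0, 0, 1, 0],
      ![0, 0, 0, 0, 0, 0, 0, 0, 0, -1, 0, 0, -1, 0],
      ![0, 0, 0, 0, 0, 0, 0, 0, 0, 0, 0, 0, -1, 1],
      ![0, 0, 0, 0, 0, 0, 0, 0, 1, 0, 0, 0, 0, 0],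
      ![0, 0, 0, 0, 0, 0, 0, 0, 0, 1, 1, 0, 1, 0],
      ![0, 0, 0, 0, 0, 0, 0, 0, 0, 0, 0, 0, 1, 0],
      ![0, 0, 0, 0, 0, 0, 0, 0, 0, 1, 0, 1, 1, 0]]

/-- The matrix representation of the action of χ̂ on Pic(X). -/
def Mchi : Matrix (Fin 14) (Fin 14) ℤ :=
  Matrix.of
    ![![0, 0, 0, 1, 0, 0, 0, 0, 1, 1, 1, 0, 0, 0],
      ![1, 0, 0, 0, 0, 0, 0, 0, 2, 1, 2, 2, 0, 1],
      ![0, 1, 0, 0, 0, 0, 0, 0, 2, 0, 1, 1, 0, 2],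
      ![0, 0, 1, 0, 0, 0, 0, 0, 1, 0, 0, -1, 0, 1],
      ![0, 0, 0, 0, 0, 0, 0, 1, 1, 1, 1, 1, 0, 0],
      ![0, 0, 0, 0, 1, 0, 0, 0, 1, 0, 1, 1, 0, 1],
      ![0, 0, 0, 0, 0, 1, 0, 0, 1, 0, 0, 0, 0, 1],
      ![0, 0, 0, 0, 0, 0, 1, 0, 0, 0, 0, -1, 0, 0],
      ![0, 0, 0, 0, 0, 0, 0, 0, 1, 1, 1, 1, 1, 0],
      ![0, 0, 0, 0, 0, 0, 0, 0, 0, 1, 0, 1, 0, 0],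
      ![0, 0, 0, 0, 0, 0, 0, 0, 1, 0, 1, 1, 0, 1],
      ![0, 0, 0, 0, 0, 0, 0, 0, 1, 0, 0, 0, 0, 1],
      ![0, 0, 0, 0, 0, 0, 0, 0, -1, -1, -1, -1, 0, -1],
      ![0, 0, 0, 0, 0, 0, 0, 0, -1, 0, 0, -1, 0, 0]]

def Pmat : Matrix (Fin 14) (Fin 14) ℤ :=
  Matrix.of
    ![![-1, 0, 0, 0, 1, -1, 0, -1, 1, -1, 1, 1, 0, 1],
      ![0, -1, 0, 0, 1, 0, 0, -1, 1, -1, 1, 1, 0, 1],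
      ![1, 0, 0, 0, 0, 0, 0, 0, 0, 0, 0, 0, 0, 0],
      ![0, 1, 0, 0, 0, 0, 0, 0, 0, 0, 0, 0, 0, 0],
      ![0, 0, -1, 0, 0, 0, -1, 0, 0, 0, 0, 0, 0, 0],
      ![0, 0, 0, -1, 1, 0, 0, 0, 1, -1, 1, 1, 0, 1],
      ![0, 0, 1, 0, 0, 0, 0, 0, 0, 0, 0, 0, 0, 0],
      ![0, 0, 0, 1, 0, 0, 0, 0, 0, 0, 0, 0, 0, 0],
      ![0, 0, 0, 0, -1, 0, 0, 0, 0, 1, -1, -1, 0, -1],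
      ![0, 0, 0, 0, -1, 0, 0, 0, 0, -1, 0, 0, 1, 0],
      ![0, 0, 0, 0, 1, 0, 0, 0, 0, 0, 0, 0, -1, 0],
      ![0, 0, 0, 0, 0, 0, 0, 0, 0, 0, 1, 0, 0, 0],
      ![0, 0, 0, 0, 0, 0, 0, 0, 0, 0, 0, 1, 0, 0],
      ![0, 0, 0, 0, 1, 0, 0, 0, 0, 0, 0, 0, 0, 0]]

def Pmatinv : Matrix (Fin 14) (Fin 14) ℤ :=
  Matrix.of
    ![![0, 0, 1, 0, 0, 0, 0, 0, 0, 0, 0, 0, 0, 0],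
      ![0, 0, 0, 1, 0, 0, 0, 0, 0, 0, 0, 0, 0, 0],
      ![0, 0, 0, 0, 0, 0, 1, 0, 0, 0, 0, 0, 0, 0],
      ![0, 0, 0, 0, 0, 0, 0, 1, 0, 0, 0, 0, 0, 0],
      ![0, 0, 0, 0, 0, 0, 0, 0, 0, 0, 0, 0, 0, 1],
      ![-1, 1, -1, 1, 0, 0, 0, 0, 0, 0, 0, 0, 0, 0],
      ![0, 0, 0, 0, -1, 0, -1, 0, 0, 0, 0, 0, 0, 0],
      ![0, -1, 0, -1, 0, 1, 0, 1, 0, 0, 0, 0, 0, 0],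
      ![0, 0, 0, 0, 0, 1, 0, 1, 1, 0, 0, 0, 0, 0],
      ![0, 0, 0, 0, 0, 0, 0, 0, 0, -1, -1, 0, 0, 0],
      ![0, 0, 0, 0, 0, 0, 0, 0, 0, 0, 0, 1, 0, 0],
      ![0, 0, 0, 0, 0, 0, 0, 0, 0, 0, 0, 0, 1, 0],
      ![0, 0, 0, 0, 0, 0, 0, 0, 0, 0, -1, 0, 0, 1],
      ![0, 0, 0, 0, 0, 0, 0, 0, -1, -1, -1, -1, -1, -1]]

def Tmat : Matrix (Fin 14) (Fin 14) ℤ :=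
  Matrix.of
    ![![-1, 0, 0, 0, 0, -1, 0, -1, 1, -1, 2, 0, 0, 0],
      ![0, -1, 0, 0, 0, 0, 0, -1, 1, -1, 2, 1, 1, 1],
      ![0, 0, -1, 0, 0, 0, -1, 0, 0, 0, 1, 0, 0, 0],
      ![0, 0, 0, -1, 0, 0, 0, 0, 1, -1, 1, 1, 1, 1],
      ![0, 0, 0, 0, -1, 0, 0, 0, 0, 0, 0, 0, 1, 0],
      ![0, 0, 0, 0, 0, 1, 0, 0, 0, 0, 0, 0, 0, 0],
      ![0, 0, 0, 0, 0, 0, 1, 0, 0, 0, 0, 1, 0, 1],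
      ![0, 0, 0, 0, 0, 0, 0, 1, 0, 0, 0, 1, 0, 1],
      ![0, 0, 0, 0, 0, 0, 0, 0, 1, 0, 0, -1, 0, -1],
      ![0, 0, 0, 0, 0, 0, 0, 0, 0, 1, 0, 0, 0, 1],
      ![0, 0, 0, 0, 0, 0, 0, 0, 0, 0, 1, 0, 0, 0],
      ![0, 0, 0, 0, 0, 0, 0, 0, 0, 0, 0, 1, 0, 1],
      ![0, 0, 0, 0, 0, 0, 0, 0, 0, 0, 0, 0, 1, 1],
      ![0, 0, 0, 0, 0, 0, 0, 0, 0, 0, 0, 0, 0, 1]]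

lemma charpoly_similar {n R : Type*} [CommRing R] [Fintype n] [DecidableEq n]
    (P Q A B : Matrix n n R) (h1 : P * Q = 1) (h3 : A = P * B * Q) :
    A.charpoly = B.charpoly := by
  have hmap : ∀ (U V : Matrix n n R),
      (U * V).map (C : R →+* R[X]) = U.map C * V.map C := fun U V =>
    Matrix.map_mul
  have key : A.charmatrix = P.map (C : R →+* R[X]) * B.charmatrix * Q.map C := by
    rw [Matrix.charmatrix, Matrix.charmatrix, RingHom.mapMatrix_apply, RingHom.mapMatrix_apply]
    rw [mul_sub, sub_mul, h3, hmap, hmap]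
    congr 1
    have : Matrix.scalar n (X : R[X]) = (X : R[X]) • (1 : Matrix n n R[X]) := by
      simp [Matrix.scalar, Matrix.smul_one_eq_diagonal]
    rw [this, Matrix.mul_smul, mul_one, Matrix.smul_mul, ← hmap, h1]
    simp
  rw [Matrix.charpoly, Matrix.charpoly, key, Matrix.det_mul, Matrix.det_mul]
  rw [mul_comm ((P.map C).det) _, mul_assoc, ← Matrix.det_mul, ← hmap, h1]
  simp

lemma Tmat_triangular : Tmat.BlockTriangular id := by
  show ∀ i j : Fin 14, j < i → Tmat i j = 0
  letI : ∀ i : Fin 14, Decidable (∀ j : Fin 14, j < i → Tmat i j = 0) := fun i => inferInstance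
  decide

set_option maxHeartbeats 1000000 in
/-- The characteristic polynomial of M = M_φ · M_χ, the action of φ̂∘χ̂ on the
Picard lattice, is (λ−1)⁹(λ+1)⁵. -/
theorem Mphi_mul_Mchi_charpoly :
    (Mphi * Mchi).charpoly = (X - 1) ^ 9 * (X + 1) ^ 5 := by
  have h1 : Pmat * Pmatinv = 1 := by decide
  have h3 : Mphi * Mchi = Pmat * Tmat * Pmatinv := by decide
  rw [charpoly_similar Pmat Pmatinv _ Tmat h1 h3,
    Matrix.charpoly_of_upperTriangular Tmat Tmat_triangular]
  simp only [Fin.prod_univ_succ, Fin.prod_univ_zero, Tmat, Matrix.of_apply,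
    Matrix.cons_val', Matrix.cons_val_zero, Matrix.cons_val_one, Matrix.head_cons,
    Matrix.head_fin_const, Fin.isValue, Matrix.cons_val_succ, Matrix.empty_val',
    Matrix.cons_val_fin_one, map_one, map_neg, mul_one]
  ring
end

section
/- Under the change of variables z̃ = z, w̃ = z/(w+1), the invariant K(z,w) = z + w + z/w + (αβ+1)w/z + (α+β+1)/w + (2αβ+α+β+1)/z + αβw/z^2 + (αβ+α+β)/(zw) + 2αβ/z^2 + αβ/(z^2 w) transforms into K = ((−α−β−2)·w̃^2 + (−z̃^2 −α −β + 2z̃ + 1)·w̃ − (z̃+1)(αβ + z̃)) / ((−z̃ + w̃)·w̃), a ratio of polynomials of bidegree at most (2,2) in (z̃, w̃). -/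
set_option maxHeartbeats 1000000 in
private lemma K_aux {F : Type*} [Field F] (a b z t : F)
    (hz : z ≠ 0) (ht : t ≠ 0) (hzt : z - t ≠ 0) :
    z + (z - t) / t + z * t / (z - t) + (a * b + 1) * (z - t) / (t * z) +
      (a + b + 1) * t / (z - t) +
      (2 * (a * b) + a + b + 1) / z + a * b * (z - t) / (t * z ^ 2) +
      (a * b + a + b) * t / (z * (z - t)) + 2 * (a * b) / (z ^ 2) +
      a * b * t / (z ^ 2 * (z - t)) =
    -(((-a - b - 2) * t ^ 2 + (-z ^ 2 - a - b + 2 * z + 1) * t -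
      (z + 1) * (a * b + z)) / ((z - t) * t)) := by
  set D := z ^ 2 * t * (z - t) with hDdef
  have hD : D ≠ 0 := mul_ne_zero (mul_ne_zero (pow_ne_zero 2 hz) ht) hzt
  have hz2 : z ^ 2 ≠ 0 := pow_ne_zero 2 hz
  have e1 : z = z * (z ^ 2 * t * (z - t)) / D := by rw [eq_div_iff hD]
  have e2 : (z - t) / t = (z - t) * (z ^ 2 * (z - t)) / D := by
    rw [div_eq_div_iff ht hD]; ring
  have e3 : z * t / (z - t) = z * t * (z ^ 2 * t) / D := by
    rw [div_eq_div_iff hzt hD]; ring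
  have e4 : (a * b + 1) * (z - t) / (t * z) = (a * b + 1) * (z - t) * (z * (z - t)) / D := by
    rw [div_eq_div_iff (mul_ne_zero ht hz) hD]; ring
  have e5 : (a + b + 1) * t / (z - t) = (a + b + 1) * t * (z ^ 2 * t) / D := by
    rw [div_eq_div_iff hzt hD]; ring
  have e6 : (2 * (a * b) + a + b + 1) / z = (2 * (a * b) + a + b + 1) * (z * t * (z - t)) / D := by
    rw [div_eq_div_iff hz hD]; ring
  have e7 : a * b * (z - t) / (t * z ^ 2) = a * b * (z - t) * (z - t) / D := by
    rw [div_eq_div_iff (mul_ne_zero ht hz2) hD]; ring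
  have e8 : (a * b + a + b) * t / (z * (z - t)) = (a * b + a + b) * t * (z * t) / D := by
    rw [div_eq_div_iff (mul_ne_zero hz hzt) hD]; ring
  have e9 : 2 * (a * b) / z ^ 2 = 2 * (a * b) * (t * (z - t)) / D := by
    rw [div_eq_div_iff hz2 hD]; ring
  have e10 : a * b * t / (z ^ 2 * (z - t)) = a * b * t * t / D := by
    rw [div_eq_div_iff (mul_ne_zero hz2 hzt) hD]; ring
  have eR : -(((-a - b - 2) * t ^ 2 + (-z ^ 2 - a - b + 2 * z + 1) * t -
      (z + 1) * (a * b + z)) / ((z - t) * t)) =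
      (-((-a - b - 2) * t ^ 2 + (-z ^ 2 - a - b + 2 * z + 1) * t -
      (z + 1) * (a * b + z)) * z ^ 2) / D := by
    rw [neg_div', div_eq_div_iff (mul_ne_zero hzt ht) hD]; ring
  rw [e2, e3, e4, e5, e6, e7, e8, e9, e10, eR]
  nth_rewrite 1 [e1]
  simp only [← add_div]
  rw [div_eq_div_iff hD hD]
  ring

/-- Under the change of variables z̃ = z, w̃ = z/(w+1), the invariant K of the
deformed D4 map becomes a ratio of polynomials of bidegree at most (2,2):
K = ((−α−β−2)w̃² + (−z̃²−α−β+2z̃+1)w̃ − (z̃+1)(αβ+z̃)) / ((−z̃+w̃)w̃). -/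
theorem K_bidegree_two_two_chart {F : Type*} [Field F] (a b z w : F)
    (hz : z ≠ 0) (hw : w ≠ 0) (hw1 : w + 1 ≠ 0)
    (hwt : z / (w + 1) ≠ 0) (hd : -z + z / (w + 1) ≠ 0) :
    z + w + z / w + (a * b + 1) * w / z + (a + b + 1) / w +
      (2 * (a * b) + a + b + 1) / z + a * b * w / z ^ 2 +
      (a * b + a + b) / (z * w) + 2 * (a * b) / z ^ 2 + a * b / (z ^ 2 * w) =
    ((-a - b - 2) * (z / (w + 1)) ^ 2 +
      (-z ^ 2 - a - b + 2 * z + 1) * (z / (w + 1)) -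
      (z + 1) * (a * b + z)) / ((-z + z / (w + 1)) * (z / (w + 1))) := by
  obtain ⟨t, ht⟩ : ∃ t, z / (w + 1) = t := ⟨_, rfl⟩
  rw [ht]
  have htz : t ≠ 0 := ht ▸ hwt
  have hd' : -z + t ≠ 0 := ht ▸ hd
  have hzt : z - t ≠ 0 := fun h => hd' (by linear_combination -h)
  have hrel : t * (w + 1) = z := by
    rw [← ht]; field_simp
  have hvw : w = (z - t) / t := by
    rw [eq_div_iff htz]; linear_combination hrel
  rw [hvw]
  have f3 : z / ((z - t) / t) = z * t / (z - t) := div_div_eq_mul_div z (z - t) t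
  have f4 : (a * b + 1) * ((z - t) / t) / z = (a * b + 1) * (z - t) / (t * z) := by
    rw [← mul_div_assoc, div_div]
  have f5 : (a + b + 1) / ((z - t) / t) = (a + b + 1) * t / (z - t) :=
    div_div_eq_mul_div _ _ _
  have f7 : a * b * ((z - t) / t) / z ^ 2 = a * b * (z - t) / (t * z ^ 2) := by
    rw [← mul_div_assoc, div_div]
  have f8 : (a * b + a + b) / (z * ((z - t) / t)) = (a * b + a + b) * t / (z * (z - t)) := by
    rw [← mul_div_assoc, div_div_eq_mul_div]
  have f10 : a * b / (z ^ 2 * ((z - t) / t)) = a * b * t / (z ^ 2 * (z - t)) := by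
    rw [← mul_div_assoc, div_div_eq_mul_div]
  have fR : (-z + t) * t = -((z - t) * t) := by ring
  rw [f3, f4, f5, f7, f8, f10, fR, div_neg]
  exact K_aux a b z t hz htz hzt
end
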